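/- Let B be a generalised Cole extension of a uniform algebra A with associated maps Π : Y → X and T : C(Y) → C(X). If B is normal on Y then A is normal on X. -/

import Mathlib

/-- A uniform algebra: closed, point-separating, unital subalgebra of C(Z, ℂ). -/
def IsUniformAlgebra {Z : Type*} [TopologicalSpace Z] [CompactSpace Z] [T2Space Z]
    (A : Subalgebra ℂ C(Z, ℂ)) : Prop :=
  IsClosed (A : Set C(Z, ℂ)) ∧ ∀ z w : Z, z ≠ w → ∃ f ∈ A, f z ≠ f w

/-- `B` is a generalised Cole extension of `A` with associated maps `proj` and `T`:
`proj` is a continuous surjection, `T` is a unital norm-one linear map with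
`T ∘ proj* = id` and `T(B) = A`. -/
def IsGenColeExtension {X Y : Type*}
    [TopologicalSpace X] [CompactSpace X] [T2Space X]
    [TopologicalSpace Y] [CompactSpace Y] [T2Space Y]
    (A : Subalgebra ℂ C(X, ℂ)) (B : Subalgebra ℂ C(Y, ℂ))
    (proj : C(Y, X)) (T : C(Y, ℂ) →L[ℂ] C(X, ℂ)) : Prop :=
  Function.Surjective proj ∧ T 1 = 1 ∧ ‖T‖ = 1 ∧
    (∀ g : C(X, ℂ), T (g.comp proj) = g) ∧
    (∀ f : C(Y, ℂ), f ∈ B → T f ∈ A) ∧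
    (∀ g : C(X, ℂ), g ∈ A → ∃ f ∈ B, T f = g)

/-- `A` is normal on `Z`: disjoint closed sets can be separated by a function of `A`
which is 1 on one and 0 on the other. -/
def IsNormalAlgebra {Z : Type*} [TopologicalSpace Z]
    (A : Subalgebra ℂ C(Z, ℂ)) : Prop :=
  ∀ K E : Set Z, IsClosed K → IsClosed E → K ∩ E = ∅ →
    ∃ f ∈ A, (∀ z ∈ K, f z = 1) ∧ ∀ z ∈ E, f z = 0

open Set

lemma key_pos {X Y : Type*}
    [TopologicalSpace X] [CompactSpace X] [T2Space X]
    [TopologicalSpace Y] [CompactSpace Y] [T2Space Y]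
    (T : C(Y, ℂ) →L[ℂ] C(X, ℂ)) (hT1 : T 1 = 1) (hTn : ‖T‖ = 1) (x : X)
    (v : C(Y, ℂ)) (him : ∀ y, (v y).im = 0) (hre : ∀ y, 0 ≤ (v y).re) :
    ((T v) x).im = 0 ∧ 0 ≤ ((T v) x).re := by
  set M : ℝ := ‖v‖ with hMdef
  have hM : 0 ≤ M := norm_nonneg v
  have hvy : ∀ y, (v y).re ≤ M := by
    intro y
    calc (v y).re ≤ ‖v y‖ := Complex.re_le_norm _
    _ ≤ ‖v‖ := v.norm_coe_le_norm y
  have hb : ∀ t : ℝ, ‖(T v) x - ((M/2 : ℝ) + t * Complex.I)‖ ≤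
      Real.sqrt ((M/2)^2 + t^2) := by
    intro t
    set c : ℂ := ((M/2 : ℝ) + t * Complex.I) with hc
    have h1 : (T v) x - c = (T (v - c • 1)) x := by
      rw [map_sub, map_smul, hT1]
      simp
    have h2 : ‖v - c • 1‖ ≤ Real.sqrt ((M/2)^2 + t^2) := by
      rw [ContinuousMap.norm_le _ (Real.sqrt_nonneg _)]
      intro y
      apply Real.le_sqrt_of_sq_le
      have hr : ((v - c • 1) y).re = (v y).re - M/2 := by simp [hc]
      have hi : ((v - c • 1) y).im = -t := by simp [hc, him y]
      rw [Complex.sq_norm, Complex.normSq_apply, hr, hi]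
      nlinarith [hre y, hvy y]
    calc ‖(T v) x - c‖ = ‖(T (v - c • 1)) x‖ := by rw [h1]
      _ ≤ ‖T (v - c • 1)‖ := (T (v - c • 1)).norm_coe_le_norm x
      _ ≤ ‖T‖ * ‖v - c • 1‖ := T.le_opNorm _
      _ = ‖v - c • 1‖ := by rw [hTn, one_mul]
      _ ≤ _ := h2
  set a : ℝ := ((T v) x).re with ha'
  set b : ℝ := ((T v) x).im with hb'
  have key : ∀ t : ℝ, (a - M/2)^2 + (b - t)^2 ≤ (M/2)^2 + t^2 := by
    intro t
    have h := hb t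
    have h2 : ‖(T v) x - ((M/2 : ℝ) + t * Complex.I)‖^2 ≤ (M/2)^2 + t^2 := by
      have := Real.sqrt_nonneg ((M/2)^2 + t^2)
      nlinarith [norm_nonneg ((T v) x - ((M/2 : ℝ) + t * Complex.I)),
        Real.sq_sqrt (by positivity : (0:ℝ) ≤ (M/2)^2 + t^2)]
    rw [Complex.sq_norm, Complex.normSq_apply] at h2
    simp only [Complex.sub_re, Complex.sub_im, Complex.add_re, Complex.add_im,
      Complex.ofReal_re, Complex.ofReal_im, Complex.mul_re, Complex.mul_im,
      Complex.I_re, Complex.I_im] at h2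
    calc (a - M/2)^2 + (b - t)^2 = (a - M/2)*(a - M/2) + (b - t)*(b - t) := by ring
      _ ≤ _ := by convert h2 using 2 <;> ring
  have hineq : ∀ t : ℝ, (a - M/2)^2 + b^2 - (M/2)^2 ≤ 2*b*t := by
    intro t; nlinarith [key t]
  have hbz : b = 0 := by
    by_contra hb0
    have h := hineq (((a - M/2)^2 + b^2 - (M/2)^2 - 1)/(2*b))
    rw [mul_div_cancel₀ _ (by simpa using hb0 : (2:ℝ)*b ≠ 0)] at h
    linarith
  refine ⟨hbz, ?_⟩
  have := key 0
  nlinarith [hbz]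

lemma vanish_on_fiber {X Y : Type*}
    [TopologicalSpace X] [CompactSpace X] [T2Space X]
    [TopologicalSpace Y] [CompactSpace Y] [T2Space Y]
    (T : C(Y, ℂ) →L[ℂ] C(X, ℂ)) (hT1 : T 1 = 1) (hTn : ‖T‖ = 1)
    (proj : C(Y, X)) (hTproj : ∀ g : C(X, ℂ), T (g.comp proj) = g)
    (h : C(X, ℝ)) (hr : ∀ z, h z ∈ Icc (0:ℝ) 1)
    (q : C(Y, ℂ)) (hqim : ∀ y, (q y).im = 0)
    (hq0 : ∀ y, h (proj y) ≠ 0 → q y = 0)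
    (x : X) (hx : h x = 1) : (T q) x = 0 := by
  set M : ℝ := ‖q‖ with hMdef
  have hM : 0 ≤ M := norm_nonneg q
  set hC : C(X, ℂ) := ⟨fun z => ((h z : ℝ) : ℂ),
    Complex.continuous_ofReal.comp h.continuous⟩ with hCdef
  set w : C(Y, ℂ) := (M : ℂ) • ((1 : C(Y, ℂ)) - hC.comp proj) with hwdef
  have hwy : ∀ y, w y = ((M * (1 - h (proj y)) : ℝ) : ℂ) := by
    intro y
    simp only [hwdef, ContinuousMap.smul_apply, ContinuousMap.sub_apply,
      ContinuousMap.one_apply, ContinuousMap.comp_apply, hCdef,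
      ContinuousMap.coe_mk, smul_eq_mul]
    push_cast
    ring
  have hqbd : ∀ y, |(q y).re| ≤ M := fun y =>
    (Complex.abs_re_le_norm _).trans (q.norm_coe_le_norm y)
  have him1 : ∀ y, ((w + q) y).im = 0 := by
    intro y; simp [hwy y, hqim y]
  have him2 : ∀ y, ((w - q) y).im = 0 := by
    intro y; simp [hwy y, hqim y]
  have hrepos : ∀ y, 0 ≤ ((w + q) y).re ∧ 0 ≤ ((w - q) y).re := by
    intro y
    have hw' : (w y).re = M * (1 - h (proj y)) := by rw [hwy y]; simp
    by_cases hy : h (proj y) = 0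
    · obtain ⟨hb1, hb2⟩ := abs_le.mp (hqbd y)
      constructor <;>
        simp only [ContinuousMap.add_apply, ContinuousMap.sub_apply,
          Complex.add_re, Complex.sub_re, hw', hy] <;> linarith
    · have hq := hq0 y hy
      have h2 := (hr (proj y)).2
      constructor <;>
        simp only [ContinuousMap.add_apply, ContinuousMap.sub_apply,
          Complex.add_re, Complex.sub_re, hw', hq, Complex.zero_re,
          add_zero, sub_zero] <;> nlinarith
  have h1 := key_pos T hT1 hTn x (w + q) him1 (fun y => (hrepos y).1)
  have h2 := key_pos T hT1 hTn x (w - q) him2 (fun y => (hrepos y).2)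
  have hTw : (T w) x = 0 := by
    have hcomp : T w = (M : ℂ) • ((1 : C(X, ℂ)) - hC) := by
      rw [hwdef, map_smul, map_sub, hT1, hTproj]
    rw [hcomp]
    simp [hCdef, hx]
  have hsum : (T (w + q)) x + (T (w - q)) x = 0 := by
    rw [map_add, map_sub]
    simp only [ContinuousMap.add_apply, ContinuousMap.sub_apply]
    rw [hTw]; ring
  have hz1 : (T (w + q)) x = 0 := by
    have hresum : ((T (w + q)) x).re + ((T (w - q)) x).re = 0 := by
      have := congrArg Complex.re hsum; simpa using this
    apply Complex.ext
    · simp only [Complex.zero_re]; linarith [h1.2, h2.2]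
    · simpa [map_add] using h1.1
  have : (T q) x = (T (w + q)) x - (T w) x := by rw [map_add]; simp
  rw [this, hz1, hTw, sub_zero]

/-- real part of a continuous complex map, as a complex-valued continuous map -/
noncomputable def rePart {Y : Type*} [TopologicalSpace Y] (u : C(Y, ℂ)) : C(Y, ℂ) :=
  ⟨fun y => ((u y).re : ℂ),
    Complex.continuous_ofReal.comp (Complex.continuous_re.comp u.continuous)⟩

noncomputable def imPart {Y : Type*} [TopologicalSpace Y] (u : C(Y, ℂ)) : C(Y, ℂ) :=
  ⟨fun y => ((u y).im : ℂ),
    Complex.continuous_ofReal.comp (Complex.continuous_im.comp u.continuous)⟩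

lemma rePart_add_I_smul_imPart {Y : Type*} [TopologicalSpace Y] (u : C(Y, ℂ)) :
    rePart u + Complex.I • imPart u = u := by
  ext y
  simp only [ContinuousMap.add_apply, ContinuousMap.smul_apply, rePart, imPart,
    ContinuousMap.coe_mk, smul_eq_mul]
  rw [mul_comm]
  exact Complex.re_add_im (u y)

theorem normal_descends_along_gen_cole_extension {X Y : Type*}
    [TopologicalSpace X] [CompactSpace X] [T2Space X]
    [TopologicalSpace Y] [CompactSpace Y] [T2Space Y]
    (A : Subalgebra ℂ C(X, ℂ)) (hA : IsUniformAlgebra A)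
    (B : Subalgebra ℂ C(Y, ℂ)) (hB : IsUniformAlgebra B)
    (proj : C(Y, X)) (T : C(Y, ℂ) →L[ℂ] C(X, ℂ))
    (hGCE : IsGenColeExtension A B proj T)
    (hBnormal : IsNormalAlgebra B) :
    IsNormalAlgebra A := by
  obtain ⟨hsurj, hT1, hTn, hTproj, hTB, hTA⟩ := hGCE
  intro K E hK hE hKE
  have hdisj : Disjoint K E := Set.disjoint_iff_inter_eq_empty.mpr hKE
  -- separate K and E by open sets with disjoint closures
  obtain ⟨U, W, hUo, hWo, hKU, hEW, hUW⟩ := normal_separation hK hE hdisj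
  have hUW' : closure U ⊆ Wᶜ := closure_minimal hUW.subset_compl_right hWo.isClosed_compl
  have hclUE : Disjoint (closure U) E :=
    Set.disjoint_left.mpr fun a ha haE => hUW' ha (hEW haE)
  obtain ⟨U', V, hU'o, hVo, hclU, hEV, hU'V⟩ :=
    normal_separation isClosed_closure hE hclUE
  have hUV : Disjoint (closure U) (closure V) :=
    Set.disjoint_of_subset hclU
      (closure_minimal hU'V.symm.subset_compl_right hU'o.isClosed_compl)
      disjoint_compl_right
  -- Urysohn functions
  obtain ⟨h₁, h₁0, h₁1, h₁r⟩ := exists_continuous_zero_one_of_isClosed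
    hUo.isClosed_compl hK
    (Set.disjoint_left.mpr fun a ha haK => ha (hKU haK))
  obtain ⟨h₂, h₂0, h₂1, h₂r⟩ := exists_continuous_zero_one_of_isClosed
    hVo.isClosed_compl hE
    (Set.disjoint_left.mpr fun a ha haE => ha (hEV haE))
  -- the separating function upstairs
  obtain ⟨f, hfB, hf1, hf0⟩ := hBnormal (proj ⁻¹' closure U) (proj ⁻¹' closure V)
    (isClosed_closure.preimage proj.continuous)
    (isClosed_closure.preimage proj.continuous)
    (by rw [← Set.preimage_inter, Set.disjoint_iff_inter_eq_empty.mp hUV,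
      Set.preimage_empty])
  refine ⟨T f, hTB f hfB, ?_, ?_⟩
  · -- T f = 1 on K
    intro x hx
    have hvan : ∀ y, h₁ (proj y) ≠ 0 → f y = 1 := by
      intro y hy
      have hyU : proj y ∈ U := by
        by_contra hc
        exact hy (h₁0 hc)
      exact hf1 y (subset_closure hyU)
    have e₁ := vanish_on_fiber T hT1 hTn proj hTproj h₁ h₁r
      (rePart ((1 : C(Y, ℂ)) - f)) (fun y => by simp [rePart])
      (fun y hy => by simp [rePart, hvan y hy]) x (h₁1 hx)
    have e₂ := vanish_on_fiber T hT1 hTn proj hTproj h₁ h₁r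
      (imPart ((1 : C(Y, ℂ)) - f)) (fun y => by simp [imPart])
      (fun y hy => by simp [imPart, hvan y hy]) x (h₁1 hx)
    have hdec : (T ((1 : C(Y, ℂ)) - f)) x = 0 := by
      conv_lhs => rw [← rePart_add_I_smul_imPart ((1 : C(Y, ℂ)) - f)]
      rw [map_add, map_smul]
      simp only [ContinuousMap.add_apply, ContinuousMap.smul_apply, e₁, e₂]
      simp
    have : T ((1 : C(Y, ℂ)) - f) = 1 - T f := by rw [map_sub, hT1]
    rw [this] at hdec
    have : (1 : C(X, ℂ)) x - (T f) x = 0 := hdec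
    simp only [ContinuousMap.one_apply] at this
    linear_combination -this
  · -- T f = 0 on E
    intro x hx
    have hvan : ∀ y, h₂ (proj y) ≠ 0 → f y = 0 := by
      intro y hy
      have hyV : proj y ∈ V := by
        by_contra hc
        exact hy (h₂0 hc)
      exact hf0 y (subset_closure hyV)
    have e₁ := vanish_on_fiber T hT1 hTn proj hTproj h₂ h₂r
      (rePart f) (fun y => by simp [rePart])
      (fun y hy => by simp [rePart, hvan y hy]) x (h₂1 hx)
    have e₂ := vanish_on_fiber T hT1 hTn proj hTproj h₂ h₂r
      (imPart f) (fun y => by simp [imPart])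
      (fun y hy => by simp [imPart, hvan y hy]) x (h₂1 hx)
    conv_lhs => rw [← rePart_add_I_smul_imPart f]
    rw [map_add, map_smul]
    simp only [ContinuousMap.add_apply, ContinuousMap.smul_apply, e₁, e₂]
    simp
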